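/- Let A and A' be fields of characteristic 0 that are algebraic over ℚ. Then A and A' are isomorphic as fields if and only if the rational function fields A(t) and A'(t) (in one transcendental variable over A and A', respectively) are isomorphic as fields. -/

import Mathlib

/-- Key lemma: an element of `RatFunc F` algebraic over `F` is a constant. -/
lemma ratfunc_isAlgebraic_mem_range (F : Type) [Field F] (x : RatFunc F)
    (hx : IsAlgebraic F x) : ∃ a : F, algebraMap F (RatFunc F) a = x := by
  have hint : IsIntegral F x := hx.isIntegral
  have hint2 : IsIntegral (Polynomial F) x := hint.tower_top
  obtain ⟨p, hp⟩ := IsIntegrallyClosed.isIntegral_iff.mp hint2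
  have hpalg : IsAlgebraic F p := by
    rw [← isAlgebraic_algebraMap_iff (R := F) (IsFractionRing.injective (Polynomial F) (RatFunc F))]
    rw [hp]; exact hx
  have hdeg : p.natDegree = 0 := by
    by_contra h
    exact Polynomial.transcendental p h
      (mem_nonZeroDivisors_iff_ne_zero.mpr (Polynomial.leadingCoeff_ne_zero.mpr
        (fun h0 => h (by simp [h0])))) hpalg
  obtain ⟨a, rfl⟩ := Polynomial.natDegree_eq_zero.mp hdeg
  refine ⟨a, ?_⟩
  rw [IsScalarTower.algebraMap_apply F (Polynomial F) (RatFunc F), Polynomial.algebraMap_eq, hp]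

theorem stmt_1 (A A' : Type) [Field A] [Field A'] [CharZero A] [CharZero A']
    [Algebra.IsAlgebraic ℚ A] [Algebra.IsAlgebraic ℚ A'] :
    Nonempty (A ≃+* A') ↔ Nonempty (RatFunc A ≃+* RatFunc A') := by
  constructor
  · rintro ⟨e⟩
    refine ⟨IsLocalization.ringEquivOfRingEquiv (M := nonZeroDivisors (Polynomial A))
      (T := nonZeroDivisors (Polynomial A')) (RatFunc A) (RatFunc A') (Polynomial.mapEquiv e) ?_⟩
    ext q
    simp only [Submonoid.mem_map, mem_nonZeroDivisors_iff_ne_zero]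
    constructor
    · rintro ⟨p, hp, rfl⟩
      exact (Polynomial.mapEquiv e).injective.ne_iff' (map_zero _) |>.mpr hp
    · intro hq
      exact ⟨(Polynomial.mapEquiv e).symm q,
        (Polynomial.mapEquiv e).symm.injective.ne_iff' (map_zero _) |>.mpr hq,
        (Polynomial.mapEquiv e).apply_symm_apply q⟩
  · rintro ⟨e⟩
    have key : ∀ (B B' : Type) [Field B] [Field B'] [CharZero B] [CharZero B']
        [Algebra.IsAlgebraic ℚ B] [Algebra.IsAlgebraic ℚ B']
        (f : RatFunc B ≃+* RatFunc B') (b : B),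
        ∃ b' : B', algebraMap B' (RatFunc B') b' = f (algebraMap B (RatFunc B) b) := by
      intro B B' _ _ _ _ _ _ f b
      haveI : IsScalarTower ℚ B (RatFunc B) :=
        inferInstance
      haveI : IsScalarTower ℚ B' (RatFunc B') :=
        inferInstance
      have h1 : IsAlgebraic ℚ (algebraMap B (RatFunc B) b) :=
        (Algebra.IsAlgebraic.isAlgebraic b).algebraMap
      have h2 : IsAlgebraic ℚ (f (algebraMap B (RatFunc B) b)) := by
        refine h1.ringHom_of_comp_eq (RingHom.id ℚ) f.toRingHom Function.injective_id ?_
        exact Subsingleton.elim _ _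
      have h3 : IsAlgebraic B' (f (algebraMap B (RatFunc B) b)) := h2.extendScalars (algebraMap ℚ B').injective
      exact ratfunc_isAlgebraic_mem_range B' _ h3
    choose φ hφ using key A A' e
    choose ψ hψ using key A' A e.symm
    have inj : Function.Injective (algebraMap A' (RatFunc A')) := (algebraMap A' _).injective
    have inj' : Function.Injective (algebraMap A (RatFunc A)) := (algebraMap A _).injective
    refine ⟨RingEquiv.ofRingHom
      { toFun := φ
        map_one' := inj (by simp only [hφ, map_one])
        map_mul' := fun a b => inj (by simp only [hφ, map_mul])
        map_zero' := inj (by simp only [hφ, map_zero])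
        map_add' := fun a b => inj (by simp only [hφ, map_add]) }
      { toFun := ψ
        map_one' := inj' (by simp only [hψ, map_one])
        map_mul' := fun a b => inj' (by simp only [hψ, map_mul])
        map_zero' := inj' (by simp only [hψ, map_zero])
        map_add' := fun a b => inj' (by simp only [hψ, map_add]) }
      ?_ ?_⟩
    · ext a
      exact inj (by simp only [RingHom.comp_apply, RingHom.coe_mk, MonoidHom.coe_mk,
        OneHom.coe_mk, RingHom.id_apply, hφ, hψ, RingEquiv.apply_symm_apply])
    · ext a
      exact inj' (by simp only [RingHom.comp_apply, RingHom.coe_mk, MonoidHom.coe_mk,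
        OneHom.coe_mk, RingHom.id_apply, hφ, hψ, RingEquiv.symm_apply_apply])
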